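/- Let G be a graph of diameter 2 on n vertices. The Harary matrix RD(G), with entries 1/D(i,j) for i ≠ j and 0 on the diagonal, satisfies RD(G) = (1/2)(J - I) + (1/2)A(G), where A(G) is the adjacency matrix, J the all-ones matrix, and I the identity. Consequently |E(RD(G)) - (1/2)E(A(G))| ≤ n - 1. -/

import Mathlib

/-- The energy of a real matrix: the sum of the absolute values of its
eigenvalues when the matrix is symmetric (Hermitian), and `0` otherwise. -/
noncomputable def energy {n : ℕ} (M : Matrix (Fin n) (Fin n) ℝ) : ℝ :=
  if h : M.IsHermitian then ∑ i, |h.eigenvalues i| else 0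

section AuxEnergy
open Matrix Finset
variable {n : ℕ}

variable {n : ℕ}

lemma trace_form (U V : Matrix (Fin n) (Fin n) ℝ) (d e : Fin n → ℝ) :
    ((U * Matrix.diagonal d * Uᵀ) * (V * Matrix.diagonal e * Vᵀ)).trace
      = ∑ k, ∑ l, d k * e l * ((Uᵀ * V) k l)^2 := by
  have h1 : (U * Matrix.diagonal d * Uᵀ) * (V * Matrix.diagonal e * Vᵀ)
      = U * (Matrix.diagonal d * (Uᵀ * V) * Matrix.diagonal e * Vᵀ) := by
    noncomm_ring
  rw [h1, Matrix.trace_mul_comm]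
  have h2 : Matrix.diagonal d * (Uᵀ * V) * Matrix.diagonal e * Vᵀ * U
      = Matrix.diagonal d * ((Uᵀ * V) * Matrix.diagonal e * (Uᵀ * V)ᵀ) := by
    rw [Matrix.transpose_mul, Matrix.transpose_transpose]
    noncomm_ring
  rw [h2, Matrix.trace]
  apply Finset.sum_congr rfl
  intro k _
  rw [Matrix.diag_apply, Matrix.diagonal_mul, Matrix.mul_apply, Finset.mul_sum]
  apply Finset.sum_congr rfl
  intro l _
  rw [Matrix.mul_diagonal, Matrix.transpose_apply]
  ring

lemma trace_le (U V : Matrix (Fin n) (Fin n) ℝ) (d e : Fin n → ℝ)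
    (hU : Uᵀ * U = 1) (hV : V * Vᵀ = 1) (he : ∀ l, |e l| ≤ 1) :
    ((U * Matrix.diagonal d * Uᵀ) * (V * Matrix.diagonal e * Vᵀ)).trace ≤ ∑ k, |d k| := by
  rw [trace_form]
  apply Finset.sum_le_sum
  intro k _
  have hrow : ∑ l, ((Uᵀ * V) k l)^2 = 1 := by
    have h1 : (Uᵀ * V) * (Uᵀ * V)ᵀ = 1 := by
      rw [Matrix.transpose_mul, Matrix.transpose_transpose, Matrix.mul_assoc,
        ← Matrix.mul_assoc V, hV, Matrix.one_mul, hU]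
    have h2 := congrFun (congrFun h1 k) k
    simp only [Matrix.mul_apply, Matrix.transpose_apply, Matrix.one_apply_eq] at h2
    rw [← h2]
    refine Finset.sum_congr rfl fun l _ => ?_
    rw [sq, Matrix.mul_apply]
    simp only [Matrix.transpose_apply]
  calc ∑ l, d k * e l * ((Uᵀ * V) k l)^2
      ≤ ∑ l, |d k| * ((Uᵀ * V) k l)^2 := by
        apply Finset.sum_le_sum
        intro l _
        apply mul_le_mul_of_nonneg_right _ (sq_nonneg _)
        calc d k * e l ≤ |d k * e l| := le_abs_self _
          _ = |d k| * |e l| := abs_mul _ _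
          _ ≤ |d k| * 1 := by
            exact mul_le_mul_of_nonneg_left (he l) (abs_nonneg _)
          _ = |d k| := mul_one _
    _ = |d k| := by rw [← Finset.mul_sum, hrow, mul_one]

lemma trace_sgn (V : Matrix (Fin n) (Fin n) ℝ) (d : Fin n → ℝ) (hV : Vᵀ * V = 1) :
    ((V * Matrix.diagonal d * Vᵀ) *
      (V * Matrix.diagonal (fun i => if d i < 0 then (-1:ℝ) else 1) * Vᵀ)).trace
      = ∑ i, |d i| := by
  rw [trace_form, hV]
  have : ∀ k, ∑ l, d k * (if d l < 0 then (-1:ℝ) else 1) * ((1 : Matrix (Fin n) (Fin n) ℝ) k l)^2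
      = |d k| := by
    intro k
    rw [Finset.sum_eq_single k]
    · simp only [Matrix.one_apply_eq, one_pow, mul_one]
      by_cases h : d k < 0
      · rw [if_pos h, abs_of_neg h]; ring
      · rw [if_neg h, abs_of_nonneg (not_lt.mp h), mul_one]
    · intro l _ hl
      rw [Matrix.one_apply_ne (Ne.symm hl)]
      ring
    · intro h; exact absurd (Finset.mem_univ k) h
  exact Finset.sum_congr rfl fun k _ => this k

lemma herm_decomp {M : Matrix (Fin n) (Fin n) ℝ} (h : M.IsHermitian) :
    ∃ V : Matrix (Fin n) (Fin n) ℝ, Vᵀ * V = 1 ∧ V * Vᵀ = 1 ∧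
      M = V * Matrix.diagonal h.eigenvalues * Vᵀ := by
  refine ⟨(h.eigenvectorUnitary : Matrix (Fin n) (Fin n) ℝ), ?_, ?_, ?_⟩
  · have := (Matrix.mem_unitaryGroup_iff').mp h.eigenvectorUnitary.2
    rwa [Matrix.star_eq_conjTranspose, Matrix.conjTranspose_eq_transpose_of_trivial] at this
  · have := (Matrix.mem_unitaryGroup_iff).mp h.eigenvectorUnitary.2
    rwa [Matrix.star_eq_conjTranspose, Matrix.conjTranspose_eq_transpose_of_trivial] at this
  · have := h.spectral_theorem
    rwa [Unitary.conjStarAlgAut_apply, Matrix.star_eq_conjTranspose, Matrix.conjTranspose_eq_transpose_of_trivial,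
      RCLike.ofReal_real_eq_id, Function.id_comp] at this

lemma energy_herm {M : Matrix (Fin n) (Fin n) ℝ} (h : M.IsHermitian) :
    energy M = ∑ i, |h.eigenvalues i| := by
  rw [energy, dif_pos h]

lemma energy_of_decomp {M U : Matrix (Fin n) (Fin n) ℝ} {d : Fin n → ℝ}
    (hU1 : Uᵀ * U = 1) (hU2 : U * Uᵀ = 1)
    (hM : M = U * Matrix.diagonal d * Uᵀ) : energy M = ∑ i, |d i| := by
  have hherm : M.IsHermitian := by
    rw [Matrix.IsHermitian, Matrix.conjTranspose_eq_transpose_of_trivial, hM]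
    rw [Matrix.transpose_mul, Matrix.transpose_mul, Matrix.transpose_transpose,
      Matrix.diagonal_transpose, Matrix.mul_assoc]
  obtain ⟨V, hV1, hV2, hMV⟩ := herm_decomp hherm
  rw [energy_herm hherm]
  have sgn_le : ∀ (f : Fin n → ℝ) l, |if f l < 0 then (-1:ℝ) else 1| ≤ 1 := by
    intro f l; by_cases h : f l < 0 <;> simp [h]
  apply le_antisymm
  · calc ∑ i, |hherm.eigenvalues i|
        = ((V * Matrix.diagonal hherm.eigenvalues * Vᵀ) *
            (V * Matrix.diagonal (fun i => if hherm.eigenvalues i < 0 then (-1:ℝ) else 1) * Vᵀ)).trace :=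
          (trace_sgn V _ hV1).symm
      _ = ((U * Matrix.diagonal d * Uᵀ) *
            (V * Matrix.diagonal (fun i => if hherm.eigenvalues i < 0 then (-1:ℝ) else 1) * Vᵀ)).trace := by
          rw [← hMV, ← hM]
      _ ≤ ∑ i, |d i| := trace_le U V _ _ hU1 hV2 (sgn_le _)
  · calc ∑ i, |d i|
        = ((U * Matrix.diagonal d * Uᵀ) *
            (U * Matrix.diagonal (fun i => if d i < 0 then (-1:ℝ) else 1) * Uᵀ)).trace :=
          (trace_sgn U _ hU1).symm
      _ = ((V * Matrix.diagonal hherm.eigenvalues * Vᵀ) *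
            (U * Matrix.diagonal (fun i => if d i < 0 then (-1:ℝ) else 1) * Uᵀ)).trace := by
          rw [← hMV, ← hM]
      _ ≤ ∑ i, |hherm.eigenvalues i| := trace_le V U _ _ hV1 hU2 (sgn_le _)

lemma energy_add_le {X Y : Matrix (Fin n) (Fin n) ℝ}
    (hX : X.IsHermitian) (hY : Y.IsHermitian) :
    energy (X + Y) ≤ energy X + energy Y := by
  have hXY : (X + Y).IsHermitian := hX.add hY
  obtain ⟨V, hV1, hV2, hMV⟩ := herm_decomp hXY
  obtain ⟨UX, hUX1, hUX2, hX'⟩ := herm_decomp hX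
  obtain ⟨UY, hUY1, hUY2, hY'⟩ := herm_decomp hY
  have sgn_le : ∀ (f : Fin n → ℝ) l, |if f l < 0 then (-1:ℝ) else 1| ≤ 1 := by
    intro f l; by_cases h : f l < 0 <;> simp [h]
  set P : Matrix (Fin n) (Fin n) ℝ :=
    V * Matrix.diagonal (fun i => if hXY.eigenvalues i < 0 then (-1:ℝ) else 1) * Vᵀ with hP
  calc energy (X + Y) = ∑ i, |hXY.eigenvalues i| := energy_herm hXY
    _ = ((V * Matrix.diagonal hXY.eigenvalues * Vᵀ) * P).trace := (trace_sgn V _ hV1).symm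
    _ = ((X + Y) * P).trace := by rw [← hMV]
    _ = (X * P).trace + (Y * P).trace := by rw [Matrix.add_mul, Matrix.trace_add]
    _ ≤ energy X + energy Y := by
        apply add_le_add
        · rw [energy_herm hX]
          conv_lhs => rw [hX']
          exact trace_le UX V _ _ hUX1 hV2 (sgn_le _)
        · rw [energy_herm hY]
          conv_lhs => rw [hY']
          exact trace_le UY V _ _ hUY1 hV2 (sgn_le _)

lemma energy_smul {M : Matrix (Fin n) (Fin n) ℝ} (h : M.IsHermitian) (c : ℝ) :
    energy (c • M) = |c| * energy M := by
  obtain ⟨V, hV1, hV2, hMV⟩ := herm_decomp h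
  have hsm : c • M = V * Matrix.diagonal (fun i => c * h.eigenvalues i) * Vᵀ := by
    conv_lhs => rw [hMV]
    rw [show Matrix.diagonal (fun i => c * h.eigenvalues i) = c • Matrix.diagonal h.eigenvalues by
      rw [← Matrix.diagonal_smul]; rfl]
    rw [Matrix.mul_smul, Matrix.smul_mul]
  rw [energy_of_decomp hV1 hV2 hsm, energy_herm h, Finset.mul_sum]
  exact Finset.sum_congr rfl fun i _ => abs_mul c _

lemma trace_form_self (V : Matrix (Fin n) (Fin n) ℝ) (d e : Fin n → ℝ) (hV : Vᵀ * V = 1) :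
    ((V * Matrix.diagonal d * Vᵀ) * (V * Matrix.diagonal e * Vᵀ)).trace = ∑ i, d i * e i := by
  rw [trace_form, hV]
  apply Finset.sum_congr rfl
  intro k _
  rw [Finset.sum_eq_single k]
  · rw [Matrix.one_apply_eq, one_pow, mul_one]
  · intro l _ hl
    rw [Matrix.one_apply_ne (Ne.symm hl)]
    ring
  · intro h; exact absurd (Finset.mem_univ k) h

lemma eig_ge (B : Matrix (Fin n) (Fin n) ℝ)
    (hBij : ∀ i j, B i j = if i = j then (0:ℝ) else 1/2)
    (v : Fin n → ℝ) (hv : ∑ k, v k * v k = 1) (c : ℝ)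
    (hmul : B *ᵥ v = c • v) : -(1/2) ≤ c := by
  have hk : ∀ k, (B *ᵥ v) k = (1/2) * ((∑ j, v j) - v k) := by
    intro k
    rw [Matrix.mulVec, dotProduct]
    simp only [hBij]
    have : ∀ j, (if k = j then (0:ℝ) else 1/2) * v j
        = (1/2) * v j - (if k = j then (1/2) * v j else 0) := by
      intro j; by_cases h : k = j <;> simp [h]
    rw [Finset.sum_congr rfl fun j _ => this j, Finset.sum_sub_distrib, ← Finset.mul_sum,
      Finset.sum_ite_eq, if_pos (Finset.mem_univ k), mul_sub]
  have hdot : v ⬝ᵥ (B *ᵥ v) = c * (v ⬝ᵥ v) := by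
    rw [hmul]; exact dotProduct_smul c _ _
  have hvv : v ⬝ᵥ v = 1 := hv
  have hlhs : v ⬝ᵥ (B *ᵥ v) = (1/2) * ((∑ j, v j) * (∑ j, v j)) - 1/2 := by
    rw [dotProduct]
    rw [Finset.sum_congr rfl fun k _ => by rw [hk k]]
    have : ∀ k, v k * ((1/2) * ((∑ j, v j) - v k))
        = (1/2) * (v k * (∑ j, v j)) - (1/2) * (v k * v k) := by intro k; ring
    rw [Finset.sum_congr rfl fun k _ => this k, Finset.sum_sub_distrib, ← Finset.mul_sum,
      ← Finset.mul_sum, ← Finset.sum_mul, hv]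
    ring
  rw [hvv, mul_one, hlhs] at hdot
  nlinarith [mul_self_nonneg (∑ j, v j)]

lemma energy_J (hn : 1 ≤ n) :
    energy ((1/2 : ℝ) • ((Matrix.of fun _ _ : Fin n => (1:ℝ)) - 1)) ≤ (n:ℝ) - 1 := by
  set B : Matrix (Fin n) (Fin n) ℝ := (1/2 : ℝ) • ((Matrix.of fun _ _ : Fin n => (1:ℝ)) - 1)
    with hBdef
  have hBij : ∀ i j, B i j = if i = j then (0:ℝ) else 1/2 := by
    intro i j
    by_cases h : i = j <;>
      simp [hBdef, Matrix.smul_apply, Matrix.sub_apply, Matrix.one_apply, h]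
  have hB : B.IsHermitian := by
    rw [Matrix.IsHermitian, Matrix.conjTranspose_eq_transpose_of_trivial]
    ext i j
    rw [Matrix.transpose_apply, hBij, hBij]
    by_cases h : i = j
    · rw [if_pos h, if_pos h.symm]
    · rw [if_neg h, if_neg (fun hh => h hh.symm)]
  obtain ⟨V, hV1, hV2, hMV⟩ := herm_decomp hB
  set eig := hB.eigenvalues with heig
  -- sum of eigenvalues = trace = 0
  have hsum : ∑ i, eig i = 0 := by
    have h1 : B.trace = (Matrix.diagonal eig).trace := by
      conv_lhs => rw [hMV]
      rw [Matrix.trace_mul_cycle, hV1, Matrix.one_mul]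
    have h2 : B.trace = 0 := by
      rw [Matrix.trace]
      apply Finset.sum_eq_zero
      intro i _
      rw [Matrix.diag_apply, hBij, if_pos rfl]
    rw [h2, Matrix.trace_diagonal] at h1
    exact h1.symm
  -- sum of squares of eigenvalues = trace (B*B)
  have hsq : ∑ i, eig i * eig i = ((n:ℝ)^2 - n)/4 := by
    have e2 : (B * B).trace = ∑ i, eig i * eig i := by
      conv_lhs => rw [hMV]
      exact trace_form_self V eig eig hV1
    have e1 : (B * B).trace = ((n:ℝ)^2 - n)/4 := by
      rw [Matrix.trace]
      have hterm : ∀ i x : Fin n, B i x * B x i = (1/4 : ℝ) - (if i = x then (1/4:ℝ) else 0) := by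
        intro i x
        rw [hBij, hBij]
        by_cases h : i = x
        · rw [if_pos h, if_pos (h.symm), if_pos h]; ring
        · rw [if_neg h, if_neg (fun hh => h hh.symm), if_neg h]; ring
      have : ∀ i : Fin n, (B * B).diag i = ((n:ℝ) - 1)/4 := by
        intro i
        rw [Matrix.diag_apply, Matrix.mul_apply,
          Finset.sum_congr rfl fun x _ => hterm i x, Finset.sum_sub_distrib,
          Finset.sum_const, Finset.sum_ite_eq, if_pos (Finset.mem_univ i),
          Finset.card_univ, Fintype.card_fin, nsmul_eq_mul]
        ring
      rw [Finset.sum_congr rfl fun i _ => this i, Finset.sum_const, Finset.card_univ,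
        Fintype.card_fin, nsmul_eq_mul]
      ring
    rw [← e2, e1]
  -- eigenvalues are ≥ -1/2
  have hge : ∀ i, -(1/2 : ℝ) ≤ eig i := by
    intro i
    have hON := hB.eigenvectorBasis.orthonormal
    have hnorm : ‖hB.eigenvectorBasis i‖ = 1 := hON.1 i
    have hv : ∑ k, (hB.eigenvectorBasis i) k * (hB.eigenvectorBasis i) k = 1 := by
      have h1 : (inner ℝ (hB.eigenvectorBasis i) (hB.eigenvectorBasis i) : ℝ) = 1 := by
        rw [real_inner_self_eq_norm_mul_norm, hnorm, mul_one]
      rw [← h1, PiLp.inner_apply]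
      exact Finset.sum_congr rfl fun k _ => by
        simp [RCLike.inner_apply, conj_trivial, mul_comm, sq]
    exact eig_ge B hBij _ hv (eig i) (hB.mulVec_eigenvectorBasis i)
  -- cross products of shifted eigenvalues vanish
  have hμsum : ∑ i, (eig i + 1/2) = (n:ℝ)/2 := by
    rw [Finset.sum_add_distrib, hsum, Finset.sum_const, Finset.card_univ, Fintype.card_fin,
      nsmul_eq_mul]
    ring
  have hμsq : ∑ i, (eig i + 1/2) * (eig i + 1/2) = ((n:ℝ)/2) * ((n:ℝ)/2) := by
    rw [Finset.sum_congr rfl fun i _ =>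
      (by ring : (eig i + 1/2) * (eig i + 1/2) = eig i * eig i + eig i + 1/4),
      Finset.sum_add_distrib, Finset.sum_add_distrib, hsq, hsum, Finset.sum_const,
      Finset.card_univ, Fintype.card_fin, nsmul_eq_mul]
    ring
  have hcross : ∀ i j, i ≠ j → (eig i + 1/2) * (eig j + 1/2) = 0 := by
    have hs : ((n:ℝ)/2) * ((n:ℝ)/2) = ∑ i, ∑ j, (eig i + 1/2) * (eig j + 1/2) := by
      rw [← hμsum, Finset.sum_mul_sum]
    have hsplit : ∀ i, ∑ j, (eig i + 1/2) * (eig j + 1/2)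
        = (eig i + 1/2) * (eig i + 1/2)
          + ∑ j ∈ Finset.univ.erase i, (eig i + 1/2) * (eig j + 1/2) := by
      intro i
      exact (Finset.add_sum_erase _ _ (Finset.mem_univ i)).symm
    have hzero : ∑ i, ∑ j ∈ Finset.univ.erase i, (eig i + 1/2) * (eig j + 1/2) = 0 := by
      have := hs.symm
      rw [Finset.sum_congr rfl fun i _ => hsplit i, Finset.sum_add_distrib, hμsq] at this
      linarith
    intro i j hij
    have hnn : ∀ a ∈ Finset.univ (α := Fin n),
        0 ≤ ∑ b ∈ Finset.univ.erase a, (eig a + 1/2) * (eig b + 1/2) := by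
      intro a _
      apply Finset.sum_nonneg
      intro b _
      have h1 := hge a; have h2 := hge b
      nlinarith
    have h3 := (Finset.sum_eq_zero_iff_of_nonneg hnn).mp hzero i (Finset.mem_univ i)
    have hnn2 : ∀ b ∈ Finset.univ.erase i, (0:ℝ) ≤ (eig i + 1/2) * (eig b + 1/2) := by
      intro b _
      have h1 := hge i; have h2 := hge b
      nlinarith
    exact (Finset.sum_eq_zero_iff_of_nonneg hnn2).mp h3 j
      (Finset.mem_erase.mpr ⟨hij.symm, Finset.mem_univ j⟩)
  -- conclude
  rw [energy_of_decomp hV1 hV2 hMV]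
  by_cases hex : ∃ i, eig i + 1/2 ≠ 0
  · obtain ⟨i₀, hi₀⟩ := hex
    have hzero : ∀ j, j ≠ i₀ → eig j + 1/2 = 0 := by
      intro j hj
      exact (mul_eq_zero.mp (hcross i₀ j (fun h => hj h.symm))).resolve_left hi₀
    have hval : eig i₀ + 1/2 = (n:ℝ)/2 := by
      rw [← hμsum, Finset.sum_eq_single_of_mem i₀ (Finset.mem_univ i₀)
        (fun j _ hj => hzero j hj)]
    have habs : ∀ j, j ≠ i₀ → |eig j| = 1/2 := by
      intro j hj
      have := hzero j hj
      rw [show eig j = -(1/2) by linarith, abs_neg, abs_of_nonneg (by norm_num)]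
    have hn1 : (1:ℝ) ≤ (n:ℝ) := by exact_mod_cast hn
    have habs0 : |eig i₀| = ((n:ℝ) - 1)/2 := by
      rw [show eig i₀ = ((n:ℝ)-1)/2 by linarith, abs_of_nonneg (by linarith)]
    rw [← Finset.add_sum_erase _ _ (Finset.mem_univ i₀), habs0,
      Finset.sum_congr rfl fun j hj => habs j (Finset.mem_erase.mp hj).1,
      Finset.sum_const, Finset.card_erase_of_mem (Finset.mem_univ i₀),
      Finset.card_univ, Fintype.card_fin, nsmul_eq_mul, Nat.cast_sub hn]
    push_cast
    ring_nf
    linarith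
  · push_neg at hex
    exfalso
    have : ∑ i, (eig i + 1/2) = 0 := Finset.sum_eq_zero fun i _ => hex i
    rw [hμsum] at this
    have hn1 : (1:ℝ) ≤ (n:ℝ) := by exact_mod_cast hn
    linarith

end AuxEnergy

open Matrix Finset

/-- for a connected graph `G` of diameter 2, the Harary matrix
`RD(G)`, with entries `1/D(i,j)` off the diagonal, satisfies
`RD(G) = (1/2)(J - I) + (1/2)A(G)`, and hence
`|E(RD(G)) - (1/2)E(A(G))| ≤ n - 1`. -/
theorem hararyMatrix_decomposition {n : ℕ}
    (G : SimpleGraph (Fin n)) [DecidableRel G.Adj]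
    (hconn : G.Connected) (hdiam : G.diam = 2) :
    (Matrix.of fun i j : Fin n =>
        if i = j then 0 else 1 / (G.dist i j : ℝ)) =
      (1 / 2 : ℝ) • ((Matrix.of fun _ _ => (1 : ℝ)) - (1 : Matrix (Fin n) (Fin n) ℝ)) +
        (1 / 2 : ℝ) • G.adjMatrix ℝ ∧
      |energy (Matrix.of fun i j : Fin n =>
          if i = j then 0 else 1 / (G.dist i j : ℝ)) -
        (1 / 2) * energy (G.adjMatrix ℝ)| ≤ (n : ℝ) - 1 := by
  have hnonempty : Nonempty (Fin n) := hconn.nonempty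
  have hn : 1 ≤ n := Fin.pos_iff_nonempty.mpr hnonempty
  have hetop : G.ediam ≠ ⊤ := by
    intro h
    rw [SimpleGraph.diam_eq_zero_of_ediam_eq_top h] at hdiam
    exact absurd hdiam (by norm_num)
  set RD : Matrix (Fin n) (Fin n) ℝ :=
    Matrix.of fun i j : Fin n => if i = j then 0 else 1 / (G.dist i j : ℝ) with hRDdef
  set B : Matrix (Fin n) (Fin n) ℝ :=
    (1/2 : ℝ) • ((Matrix.of fun _ _ : Fin n => (1:ℝ)) - 1) with hBdef
  set C : Matrix (Fin n) (Fin n) ℝ := (1/2 : ℝ) • G.adjMatrix ℝ with hCdef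
  have hBij : ∀ i j, B i j = if i = j then (0:ℝ) else 1/2 := by
    intro i j
    by_cases h : i = j <;>
      simp [hBdef, Matrix.smul_apply, Matrix.sub_apply, Matrix.one_apply, h]
  have hCij : ∀ i j, C i j = if G.Adj i j then (1/2:ℝ) else 0 := by
    intro i j
    by_cases h : G.Adj i j <;>
      simp [hCdef, Matrix.smul_apply, SimpleGraph.adjMatrix_apply, h]
  have heq : RD = B + C := by
    ext i j
    rw [Matrix.add_apply, hBij, hCij, hRDdef, Matrix.of_apply]
    by_cases h : i = j
    · rw [if_pos h, if_pos h, if_neg (by rw [h]; exact G.irrefl)]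
      norm_num
    · rw [if_neg h, if_neg h]
      by_cases hadj : G.Adj i j
      · rw [if_pos hadj, SimpleGraph.dist_eq_one_iff_adj.mpr hadj]
        norm_num
      · rw [if_neg hadj]
        have h1 : G.dist i j ≤ 2 := hdiam ▸ SimpleGraph.dist_le_diam hetop
        have h2 : 0 < G.dist i j := hconn.pos_dist_of_ne h
        have h3 : G.dist i j ≠ 1 := fun hh =>
          hadj (SimpleGraph.dist_eq_one_iff_adj.mp hh)
        have h4 : G.dist i j = 2 := by omega
        rw [h4]
        norm_num
  have hA : (G.adjMatrix ℝ).IsHermitian := by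
    rw [Matrix.IsHermitian, Matrix.conjTranspose_eq_transpose_of_trivial]
    exact G.isSymm_adjMatrix
  have hAdj : (G.adjMatrix ℝ).IsHermitian := hA
  have hB : B.IsHermitian := by
    rw [Matrix.IsHermitian, Matrix.conjTranspose_eq_transpose_of_trivial]
    ext i j
    rw [Matrix.transpose_apply, hBij, hBij]
    by_cases h : i = j
    · rw [if_pos h, if_pos h.symm]
    · rw [if_neg h, if_neg (fun hh => h hh.symm)]
  have hC : C.IsHermitian := by
    rw [Matrix.IsHermitian, Matrix.conjTranspose_eq_transpose_of_trivial]
    ext i j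
    rw [Matrix.transpose_apply, hCij, hCij]
    by_cases h : G.Adj i j
    · rw [if_pos h, if_pos h.symm]
    · rw [if_neg h, if_neg (fun hh => h hh.symm)]
  have hRD : RD.IsHermitian := by rw [heq]; exact hB.add hC
  have hEB : energy B ≤ (n:ℝ) - 1 := energy_J hn
  have hEC : energy C = (1/2) * energy (G.adjMatrix ℝ) := by
    rw [hCdef, energy_smul hA (1/2)]
    norm_num
  have hupper : energy RD ≤ energy B + energy C := by
    rw [heq]; exact energy_add_le hB hC
  have hlower : energy C ≤ energy RD + energy B := by
    have hCdecomp : C = RD + (-1 : ℝ) • B := by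
      rw [heq, neg_one_smul]; abel
    have hnegB : ((-1 : ℝ) • B).IsHermitian := by
      rw [neg_one_smul]; exact hB.neg
    have hEnegB : energy ((-1 : ℝ) • B) = energy B := by
      rw [energy_smul hB (-1)]
      norm_num
    calc energy C = energy (RD + (-1 : ℝ) • B) := by rw [← hCdecomp]
      _ ≤ energy RD + energy ((-1 : ℝ) • B) := energy_add_le hRD hnegB
      _ = energy RD + energy B := by rw [hEnegB]
  refine ⟨heq, ?_⟩
  rw [abs_le]
  constructor
  · linarith
  · linarith
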